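/- For every s ≥ 3 and r ≥ 2, RKG_r(s,s) ≤ (R(s,s-1) + 1)·r + R(s,s-1) - 1; i.e., every red/blue edge-coloring of KG((R(s,s-1)+1)r + R(s,s-1) - 1, r) contains a monochromatic clique of size s. -/

import Mathlib

open Finset

/-- A clique in the Kneser graph `KG(n,r)`: a family of pairwise disjoint
`r`-element subsets of `[n] = {0, …, n-1}`. -/
def IsKneserClique (n r : ℕ) (S : Finset (Finset ℕ)) : Prop :=
  (∀ A ∈ S, A ⊆ Finset.range n ∧ A.card = r) ∧
  (S : Set (Finset ℕ)).Pairwise Disjoint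

/-- A clique all of whose edges get color `b` under the edge-coloring `c`. -/
def MonoClique (c : Finset ℕ → Finset ℕ → Bool) (b : Bool) (S : Finset (Finset ℕ)) : Prop :=
  ∀ A ∈ S, ∀ B ∈ S, A ≠ B → c A B = b

/-- `n` is Ramsey for the Kneser graph `KG(n,r)`: every red/blue edge-coloring
contains a red `s`-clique or a blue `t`-clique. -/
def KneserRamseyProp (n r s t : ℕ) : Prop :=
  ∀ c : Finset ℕ → Finset ℕ → Bool, (∀ A B, c A B = c B A) →
    (∃ S : Finset (Finset ℕ), IsKneserClique n r S ∧ S.card = s ∧ MonoClique c true S) ∨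
    (∃ S : Finset (Finset ℕ), IsKneserClique n r S ∧ S.card = t ∧ MonoClique c false S)

/-- The `r`-Kneser Ramsey number `RKG_r(s,t)`. -/
noncomputable def RKG (r s t : ℕ) : ℕ := sInf {n | KneserRamseyProp n r s t}

/-- `n` is Ramsey for `(s,t)`: every red/blue edge-coloring of the complete
graph on `[n]` contains a red `K_s` or a blue `K_t`. -/
def RamseyProp (n s t : ℕ) : Prop :=
  ∀ c : ℕ → ℕ → Bool, (∀ u v, c u v = c v u) →
    (∃ S : Finset ℕ, S ⊆ Finset.range n ∧ S.card = s ∧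
      ∀ u ∈ S, ∀ v ∈ S, u ≠ v → c u v = true) ∨
    (∃ S : Finset ℕ, S ⊆ Finset.range n ∧ S.card = t ∧
      ∀ u ∈ S, ∀ v ∈ S, u ≠ v → c u v = false)

/-- The classical Ramsey number `R(s,t)`. -/
noncomputable def ramseyNumber (s t : ℕ) : ℕ := sInf {n | RamseyProp n s t}

lemma exists_matching (r : ℕ) (hr : 1 ≤ r) :
    ∀ (j : ℕ) (V : Finset ℕ), r * j ≤ V.card →
    ∃ M : Finset (Finset ℕ), M.card = j ∧ (∀ A ∈ M, A ⊆ V ∧ A.card = r) ∧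
      (M : Set (Finset ℕ)).Pairwise Disjoint := by
  intro j
  induction j with
  | zero => exact fun V _ => ⟨∅, by simp, by simp, by simp⟩
  | succ j ih =>
    intro V hV
    have hrV : r ≤ V.card := le_trans (Nat.le_mul_of_pos_right r (Nat.succ_pos j)) hV
    obtain ⟨A, hAV, hAcard⟩ := Finset.exists_subset_card_eq hrV
    obtain ⟨M, hMcard, hMmem, hMdisj⟩ := ih (V \ A) (by
      rw [Finset.card_sdiff_of_subset hAV, hAcard]
      have : r * (j + 1) = r * j + r := by ring
      omega)
    have hAnotM : A ∉ M := by
      intro hA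
      have := (hMmem A hA).1
      have : A = ∅ := by
        apply Finset.eq_empty_of_forall_notMem
        intro x hx
        exact (Finset.mem_sdiff.mp (this hx)).2 hx
      simp [this] at hAcard; omega
    refine ⟨insert A M, ?_, ?_, ?_⟩
    · rw [Finset.card_insert_of_notMem hAnotM, hMcard]
    · intro B hB
      rcases Finset.mem_insert.mp hB with h | h
      · exact ⟨h ▸ hAV, h ▸ hAcard⟩
      · exact ⟨(hMmem B h).1.trans (Finset.sdiff_subset), (hMmem B h).2⟩
    · rw [Finset.coe_insert]
      rw [Set.pairwise_insert]
      refine ⟨hMdisj, fun B hB _ => ?_⟩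
      have hBsub := (hMmem B hB).1
      have hd : Disjoint A B := by
        rw [Finset.disjoint_right]
        intro x hxB hxA
        exact (Finset.mem_sdiff.mp (hBsub hxB)).2 hxA
      exact ⟨hd, hd.symm⟩

lemma swap_pair (V : Finset ℕ) (c : Finset ℕ → Bool) (r : ℕ) :
    ∀ (d : ℕ) (A B : Finset ℕ), (A \ B).card ≤ d → A ⊆ V → B ⊆ V →
      A.card = r → B.card = r → c A ≠ c B →
    ∃ X Y : Finset ℕ, X ⊆ V ∧ Y ⊆ V ∧ X.card = r ∧ Y.card = r ∧
      (X ∪ Y).card ≤ r + 1 ∧ c X ≠ c Y := by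
  intro d
  induction d with
  | zero =>
    intro A B hd hAV hBV hA hB hne
    have : A = B := Finset.eq_of_subset_of_card_le
      (by rw [← Finset.sdiff_eq_empty_iff_subset]; exact Finset.card_eq_zero.mp (Nat.le_zero.mp hd))
      (by omega)
    exact absurd (this ▸ hne) (by simp)
  | succ d ih =>
    intro A B hd hAV hBV hA hB hne
    by_cases hAB : A \ B = ∅
    · have : A = B := Finset.eq_of_subset_of_card_le
        (Finset.sdiff_eq_empty_iff_subset.mp hAB) (by omega)
      exact absurd (this ▸ hne) (by simp)
    · obtain ⟨a, ha⟩ := Finset.nonempty_iff_ne_empty.mpr hAB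
      have hBA : (B \ A).Nonempty := by
        rw [← Finset.card_pos]
        have h1 : (A \ B).card + (A ∩ B).card = A.card := Finset.card_sdiff_add_card_inter A B
        have h2 : (B \ A).card + (B ∩ A).card = B.card := Finset.card_sdiff_add_card_inter B A
        have h3 : (A ∩ B).card = (B ∩ A).card := by rw [Finset.inter_comm]
        have h4 : 0 < (A \ B).card := Finset.card_pos.mpr ⟨a, ha⟩
        omega
      obtain ⟨b, hb⟩ := hBA
      have haA : a ∈ A := (Finset.mem_sdiff.mp ha).1
      have haB : a ∉ B := (Finset.mem_sdiff.mp ha).2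
      have hbB : b ∈ B := (Finset.mem_sdiff.mp hb).1
      have hbA : b ∉ A := (Finset.mem_sdiff.mp hb).2
      set A' := insert b (A.erase a) with hA'def
      have hbnot : b ∉ A.erase a := fun h => hbA (Finset.mem_of_mem_erase h)
      have hA'card : A'.card = r := by
        rw [hA'def, Finset.card_insert_of_notMem hbnot, Finset.card_erase_of_mem haA, hA]
        have : 1 ≤ r := by rw [← hA]; exact Finset.card_pos.mpr ⟨a, haA⟩
        omega
      have hA'V : A' ⊆ V := by
        intro x hx
        rcases Finset.mem_insert.mp hx with h | h
        · exact hBV (h ▸ hbB)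
        · exact hAV (Finset.mem_of_mem_erase h)
      have hunion : (A ∪ A').card ≤ r + 1 := by
        have : A ∪ A' ⊆ insert b A := by
          intro x hx
          rcases Finset.mem_union.mp hx with h | h
          · exact Finset.mem_insert_of_mem h
          · rcases Finset.mem_insert.mp h with h | h
            · exact h ▸ Finset.mem_insert_self b A
            · exact Finset.mem_insert_of_mem (Finset.mem_of_mem_erase h)
        calc (A ∪ A').card ≤ (insert b A).card := Finset.card_le_card this
          _ ≤ A.card + 1 := Finset.card_insert_le b A
          _ = r + 1 := by omega
      by_cases hcc : c A = c A'
      · refine ih A' B ?_ hA'V hBV hA'card hB (hcc ▸ hne)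
        have hsub : A' \ B ⊆ (A \ B).erase a := by
          intro x hx
          obtain ⟨hx1, hx2⟩ := Finset.mem_sdiff.mp hx
          rcases Finset.mem_insert.mp hx1 with h | h
          · exact absurd (h ▸ hbB) hx2
          · exact Finset.mem_erase.mpr ⟨(Finset.mem_erase.mp h).1,
              Finset.mem_sdiff.mpr ⟨(Finset.mem_erase.mp h).2, hx2⟩⟩
        calc (A' \ B).card ≤ ((A \ B).erase a).card := Finset.card_le_card hsub
          _ = (A \ B).card - 1 := Finset.card_erase_of_mem ha
          _ ≤ d := by omega
      · exact ⟨A, A', hAV, hA'V, hA, hA'card, hunion, hcc⟩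

lemma kneser_matching (r : ℕ) (hr : 1 ≤ r) :
    ∀ (k : ℕ) (V : Finset ℕ) (c : Finset ℕ → Bool), (r + 1) * k ≤ V.card + 1 →
    ∃ (b : Bool) (M : Finset (Finset ℕ)), M.card = k ∧
      (∀ A ∈ M, A ⊆ V ∧ A.card = r ∧ c A = b) ∧
      (M : Set (Finset ℕ)).Pairwise Disjoint := by
  intro k
  induction k with
  | zero => exact fun V c _ => ⟨true, ∅, by simp, by simp, by simp⟩
  | succ k ih =>
    intro V c hV
    have hexp : (r + 1) * (k + 1) = r * (k+1) + (k + 1) := by ring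
    by_cases hsame : ∀ A, A ⊆ V → A.card = r → ∀ B, B ⊆ V → B.card = r → c A = c B
    · obtain ⟨M, hMcard, hMmem, hMdisj⟩ := exists_matching r hr (k+1) V (by omega)
      have hMne : M.Nonempty := Finset.card_pos.mp (by omega)
      obtain ⟨A₀, hA₀⟩ := hMne
      refine ⟨c A₀, M, hMcard, fun A hA => ⟨(hMmem A hA).1, (hMmem A hA).2,
        hsame A (hMmem A hA).1 (hMmem A hA).2 A₀ (hMmem A₀ hA₀).1 (hMmem A₀ hA₀).2⟩, hMdisj⟩
    · push_neg at hsame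
      obtain ⟨A, hAV, hAc, B, hBV, hBc, hne⟩ := hsame
      obtain ⟨X, Y, hXV, hYV, hXc, hYc, hXY, hcne⟩ :=
        swap_pair V c r (A \ B).card A B le_rfl hAV hBV hAc hBc hne
      set U := X ∪ Y with hU
      have hUV : U ⊆ V := Finset.union_subset hXV hYV
      obtain ⟨b, M, hMcard, hMmem, hMdisj⟩ := ih (V \ U) c (by
        rw [Finset.card_sdiff_of_subset hUV]
        have hUle : U.card ≤ V.card := Finset.card_le_card hUV
        have hexp2 : (r + 1) * k + (r + 1) = (r + 1) * (k + 1) := by ring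
        omega)
      have hZ : ∃ Z, Z ⊆ U ∧ Z ⊆ V ∧ Z.card = r ∧ c Z = b := by
        by_cases h : c X = b
        · exact ⟨X, Finset.subset_union_left, hXV, hXc, h⟩
        · refine ⟨Y, Finset.subset_union_right, hYV, hYc, ?_⟩
          cases hb : c X <;> cases hcy : c Y <;> cases b <;> simp_all
      obtain ⟨Z, hZU, hZV, hZc, hZb⟩ := hZ
      have hZnot : Z ∉ M := by
        intro h
        have hsub := (hMmem Z h).1
        have : Z = ∅ := Finset.eq_empty_of_forall_notMem fun x hx =>
          (Finset.mem_sdiff.mp (hsub hx)).2 (hZU hx)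
        simp [this] at hZc; omega
      refine ⟨b, insert Z M, ?_, ?_, ?_⟩
      · rw [Finset.card_insert_of_notMem hZnot, hMcard]
      · intro A' hA'
        rcases Finset.mem_insert.mp hA' with h | h
        · exact ⟨h ▸ hZV, h ▸ hZc, h ▸ hZb⟩
        · exact ⟨(hMmem A' h).1.trans Finset.sdiff_subset, (hMmem A' h).2.1, (hMmem A' h).2.2⟩
      · rw [Finset.coe_insert, Set.pairwise_insert]
        refine ⟨hMdisj, fun B' hB' _ => ?_⟩
        have hd : Disjoint Z B' := by
          rw [Finset.disjoint_right]
          intro x hxB hxZ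
          exact (Finset.mem_sdiff.mp ((hMmem B' hB').1 hxB)).2 (hZU hxZ)
        exact ⟨hd, hd.symm⟩

def ramN : ℕ → ℕ → ℕ
  | 0, _ => 0
  | _+1, 0 => 0
  | s+1, t+1 => ramN s (t+1) + ramN (s+1) t + 1

lemma ramsey_aux (s : ℕ) :
    ∀ (t : ℕ) (V : Finset ℕ) (c : ℕ → ℕ → Bool), (∀ u v, c u v = c v u) →
      ramN s t ≤ V.card →
    (∃ S : Finset ℕ, S ⊆ V ∧ S.card = s ∧ ∀ u ∈ S, ∀ v ∈ S, u ≠ v → c u v = true) ∨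
    (∃ S : Finset ℕ, S ⊆ V ∧ S.card = t ∧ ∀ u ∈ S, ∀ v ∈ S, u ≠ v → c u v = false) := by
  induction s with
  | zero => exact fun t V c _ _ => Or.inl ⟨∅, by simp⟩
  | succ s ihs =>
    intro t
    induction t with
    | zero => exact fun V c _ _ => Or.inr ⟨∅, by simp⟩
    | succ t iht =>
      intro V c hsym hcard
      have hN : ramN (s+1) (t+1) = ramN s (t+1) + ramN (s+1) t + 1 := by simp [ramN]
      obtain ⟨v, hv⟩ : V.Nonempty := Finset.card_pos.mp (by omega)
      set W := V.erase v with hW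
      have hWcard : W.card = V.card - 1 := Finset.card_erase_of_mem hv
      set Wr := W.filter (fun u => c v u = true) with hWr
      set Wb := W.filter (fun u => ¬ (c v u = true)) with hWb
      have hsum : Wr.card + Wb.card = W.card := Finset.card_filter_add_card_filter_not _
      rcases le_or_gt (ramN s (t+1)) Wr.card with h | h
      · rcases ihs (t+1) Wr c hsym h with ⟨S, hSsub, hScard, hSred⟩ | ⟨S, hSsub, hScard, hSblue⟩
        · have hvS : v ∉ S := fun h => (Finset.mem_erase.mp (Finset.mem_of_mem_filter _ (hSsub h))).1 rfl
          refine Or.inl ⟨insert v S, ?_, ?_, ?_⟩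
          · intro x hx
            rcases Finset.mem_insert.mp hx with h | h
            · exact h ▸ hv
            · exact Finset.erase_subset v V (Finset.mem_of_mem_filter _ (hSsub h))
          · rw [Finset.card_insert_of_notMem hvS, hScard]
          · intro u hu w hw huw
            rcases Finset.mem_insert.mp hu with h1 | h1 <;> rcases Finset.mem_insert.mp hw with h2 | h2
            · exact absurd (h1.trans h2.symm) huw
            · exact h1 ▸ (Finset.mem_filter.mp (hSsub h2)).2
            · rw [hsym]; exact h2 ▸ (Finset.mem_filter.mp (hSsub h1)).2
            · exact hSred u h1 w h2 huw
        · exact Or.inr ⟨S, hSsub.trans ((Finset.filter_subset _ _).trans (Finset.erase_subset v V)), hScard, hSblue⟩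
      · have hWb : ramN (s+1) t ≤ Wb.card := by omega
        rcases iht Wb c hsym hWb with ⟨S, hSsub, hScard, hSred⟩ | ⟨S, hSsub, hScard, hSblue⟩
        · exact Or.inl ⟨S, hSsub.trans ((Finset.filter_subset _ _).trans (Finset.erase_subset v V)), hScard, hSred⟩
        · have hvS : v ∉ S := fun h => (Finset.mem_erase.mp (Finset.mem_of_mem_filter _ (hSsub h))).1 rfl
          refine Or.inr ⟨insert v S, ?_, ?_, ?_⟩
          · intro x hx
            rcases Finset.mem_insert.mp hx with h | h
            · exact h ▸ hv
            · exact Finset.erase_subset v V (Finset.mem_of_mem_filter _ (hSsub h))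
          · rw [Finset.card_insert_of_notMem hvS, hScard]
          · intro u hu w hw huw
            rcases Finset.mem_insert.mp hu with h1 | h1 <;> rcases Finset.mem_insert.mp hw with h2 | h2
            · exact absurd (h1.trans h2.symm) huw
            · have := (Finset.mem_filter.mp (hSsub h2)).2
              exact h1 ▸ (Bool.not_eq_true _).mp this
            · have := (Finset.mem_filter.mp (hSsub h1)).2
              rw [hsym]; exact h2 ▸ (Bool.not_eq_true _).mp this
            · exact hSblue u h1 w h2 huw

lemma ramseyProp_ramN (s t : ℕ) : RamseyProp (ramN s t) s t := by
  intro c hsym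
  exact ramsey_aux s t (Finset.range (ramN s t)) c hsym (by rw [Finset.card_range])

theorem rkg_diagonal_upper (r s : ℕ) (hr : 2 ≤ r) (hs : 3 ≤ s) :
    RKG r s s ≤ (ramseyNumber s (s - 1) + 1) * r + ramseyNumber s (s - 1) - 1 := by
  have hn₀ := ramseyProp_ramN s (s - 1)
  have hne : {k : ℕ | RamseyProp k s (s - 1)}.Nonempty := ⟨ramN s (s - 1), hn₀⟩
  have hmem : RamseyProp (ramseyNumber s (s - 1)) s (s - 1) := Nat.sInf_mem hne
  set m := ramseyNumber s (s - 1) with hmdef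
  have hm1 : 1 ≤ m := by
    rcases Nat.eq_zero_or_pos m with h | h
    · exfalso
      rcases hmem (fun _ _ => true) (fun _ _ => rfl) with ⟨S, hSsub, hScard, _⟩ | ⟨S, hSsub, hScard, _⟩ <;>
      · rw [h] at hSsub
        simp only [Finset.range_zero, Finset.subset_empty] at hSsub
        rw [hSsub] at hScard
        simp at hScard
        omega
    · exact h
  set n := (m + 1) * r + m - 1 with hndef
  have hmr : (m + 1) * r = m * r + r := by ring
  have hrm : (r + 1) * m = r * m + m := by ring
  have hcomm : m * r = r * m := by ring
  have key : KneserRamseyProp n r s s := by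
    intro c hsym
    have hnr : r ≤ n := by omega
    obtain ⟨A₀, hA₀V, hA₀card⟩ :=
      Finset.exists_subset_card_eq (show r ≤ (Finset.range n).card by rwa [Finset.card_range])
    set V := Finset.range n \ A₀ with hVdef
    have hVsub : V ⊆ Finset.range n := Finset.sdiff_subset
    have hVcard : V.card = n - r := by
      rw [hVdef, Finset.card_sdiff_of_subset hA₀V, Finset.card_range, hA₀card]
    have hVk : (r + 1) * m ≤ V.card + 1 := by omega
    obtain ⟨b, M, hMcard, hMmem, hMdisj⟩ :=
      kneser_matching r (by omega) m V (fun A => c A₀ A) hVk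
    have hA₀ne : A₀.Nonempty := Finset.card_pos.mp (by omega)
    have hA₀notM : ∀ A ∈ M, A₀ ≠ A := by
      intro A hA h
      obtain ⟨x, hx⟩ := hA₀ne
      exact (Finset.mem_sdiff.mp ((hMmem A hA).1 (h ▸ hx))).2 hx
    have hdisjA₀ : ∀ A ∈ M, Disjoint A₀ A := by
      intro A hA
      rw [Finset.disjoint_right]
      exact fun x hxA hx0 => (Finset.mem_sdiff.mp ((hMmem A hA).1 hxA)).2 hx0
    set e : ℕ → Finset ℕ :=
      fun u => if h : u < m then ((M.equivFin.symm ⟨u, by omega⟩ : {x // x ∈ M}) : Finset ℕ)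
        else ∅ with hedef
    have heM : ∀ u, u < m → e u ∈ M := by
      intro u h
      simp only [hedef, dif_pos h]
      exact (M.equivFin.symm ⟨u, by omega⟩).2
    have heInj : ∀ u, u < m → ∀ v, v < m → e u = e v → u = v := by
      intro u hu v hv h
      simp only [hedef, dif_pos hu, dif_pos hv] at h
      have h2 := M.equivFin.symm.injective (Subtype.ext h)
      exact congrArg Fin.val h2
    set g : ℕ → ℕ → Bool := fun u v => decide (c (e u) (e v) ≠ b) with hgdef
    have hgsym : ∀ u v, g u v = g v u := by
      intro u v
      simp only [hgdef, hsym (e u) (e v)]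
    rcases hmem g hgsym with ⟨S, hSsub, hScard, hSmono⟩ | ⟨S, hSsub, hScard, hSmono⟩
    · -- clique of color ≠ b, size s
      set T := S.image e with hTdef
      have hinjS : Set.InjOn e ↑S := fun u hu v hv h =>
        heInj u (Finset.mem_range.mp (hSsub hu)) v (Finset.mem_range.mp (hSsub hv)) h
      have hTcard : T.card = s := by rw [hTdef, Finset.card_image_of_injOn hinjS, hScard]
      have hTM : T ⊆ M := by
        intro A hA
        obtain ⟨u, hu, rfl⟩ := Finset.mem_image.mp hA
        exact heM u (Finset.mem_range.mp (hSsub hu))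
      have hclique : IsKneserClique n r T := by
        refine ⟨fun A hA => ⟨((hMmem A (hTM hA)).1).trans hVsub, (hMmem A (hTM hA)).2.1⟩, ?_⟩
        exact hMdisj.mono (Finset.coe_subset.mpr hTM)
      have hmono : ∀ A ∈ T, ∀ B ∈ T, A ≠ B → c A B ≠ b := by
        intro A hA B hB hAB
        obtain ⟨u, hu, rfl⟩ := Finset.mem_image.mp hA
        obtain ⟨v, hv, rfl⟩ := Finset.mem_image.mp hB
        have huv : u ≠ v := fun h => hAB (by rw [h])
        have h3 := hSmono u hu v hv huv
        rw [hgdef] at h3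
        exact of_decide_eq_true h3
      cases b
      · left
        refine ⟨T, hclique, hTcard, fun A hA B hB hAB => ?_⟩
        have h4 := hmono A hA B hB hAB
        cases hcb : c A B
        · exact absurd hcb h4
        · rfl
      · right
        refine ⟨T, hclique, hTcard, fun A hA B hB hAB => ?_⟩
        have h4 := hmono A hA B hB hAB
        cases hcb : c A B
        · rfl
        · exact absurd hcb h4
    · -- clique of color b, size s-1, extend with A₀
      set T := insert A₀ (S.image e) with hTdef
      have himgM : S.image e ⊆ M := by
        intro A hA
        obtain ⟨u, hu, rfl⟩ := Finset.mem_image.mp hA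
        exact heM u (Finset.mem_range.mp (hSsub hu))
      have hA₀img : A₀ ∉ S.image e := fun h => hA₀notM _ (himgM h) rfl
      have hinjS : Set.InjOn e ↑S := fun u hu v hv h =>
        heInj u (Finset.mem_range.mp (hSsub hu)) v (Finset.mem_range.mp (hSsub hv)) h
      have hTcard : T.card = s := by
        rw [hTdef, Finset.card_insert_of_notMem hA₀img, Finset.card_image_of_injOn hinjS, hScard]
        omega
      have hclique : IsKneserClique n r T := by
        constructor
        · intro A hA
          rcases Finset.mem_insert.mp hA with h | h
          · exact ⟨h ▸ hA₀V, h ▸ hA₀card⟩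
          · exact ⟨((hMmem A (himgM h)).1).trans hVsub, (hMmem A (himgM h)).2.1⟩
        · rw [hTdef, Finset.coe_insert, Set.pairwise_insert]
          refine ⟨hMdisj.mono (Finset.coe_subset.mpr himgM), fun B hB _ => ?_⟩
          have := hdisjA₀ B (himgM hB)
          exact ⟨this, this.symm⟩
      have hmono : ∀ A ∈ T, ∀ B ∈ T, A ≠ B → c A B = b := by
        intro A hA B hB hAB
        rcases Finset.mem_insert.mp hA with h1 | h1 <;> rcases Finset.mem_insert.mp hB with h2 | h2
        · exact absurd (h1.trans h2.symm) hAB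
        · subst h1
          exact (hMmem B (himgM h2)).2.2
        · subst h2
          rw [hsym]
          exact (hMmem A (himgM h1)).2.2
        · obtain ⟨u, hu, rfl⟩ := Finset.mem_image.mp h1
          obtain ⟨v, hv, rfl⟩ := Finset.mem_image.mp h2
          have huv : u ≠ v := fun h => hAB (by rw [h])
          have h3 := hSmono u hu v hv huv
          rw [hgdef] at h3
          exact not_not.mp (of_decide_eq_false h3)
      cases b
      · right
        exact ⟨T, hclique, hTcard, hmono⟩
      · left
        exact ⟨T, hclique, hTcard, hmono⟩
  exact Nat.sInf_le key
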